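/- Every Gruenhage topological space has property (*): if X is Gruenhage then there exists a sequence (𝒱ₙ)_{n∈ℕ} of families of open subsets of X such that for all distinct x, y ∈ X there exists n ∈ ℕ with (i) at least one of x, y belonging to ⋃𝒱ₙ, and (ii) every V ∈ 𝒱ₙ containing at most one of x and y. -/
import Mathlib


/-- A topological space is *Gruenhage*. -/
def IsGruenhage (X : Type*) [TopologicalSpace X] : Prop :=
  ∃ 𝒰 : ℕ → Set (Set X),
    (∀ n, ∀ U ∈ 𝒰 n, IsOpen U) ∧
    ∀ x y : X, x ≠ y →
      ∃ n, (∃ U ∈ 𝒰 n, Xor' (x ∈ U) (y ∈ U)) ∧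
        ({U ∈ 𝒰 n | x ∈ U}.Finite ∨ {U ∈ 𝒰 n | y ∈ U}.Finite)

/-- A topological space has *property (*)*. -/
def HasPropertyStar (X : Type*) [TopologicalSpace X] : Prop :=
  ∃ 𝒱 : ℕ → Set (Set X),
    (∀ n, ∀ V ∈ 𝒱 n, IsOpen V) ∧
    ∀ x y : X, x ≠ y →
      ∃ n, (x ∈ ⋃₀ 𝒱 n ∨ y ∈ ⋃₀ 𝒱 n) ∧ ∀ V ∈ 𝒱 n, ¬(x ∈ V ∧ y ∈ V)

/-- Every Gruenhage space has property (*). -/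
theorem isGruenhage_hasPropertyStar
    {X : Type*} [TopologicalSpace X] (h : IsGruenhage X) :
    HasPropertyStar X := by
  obtain ⟨𝒰, hopen, hsep⟩ := h
  refine ⟨fun m => {V | ∃ F, F ⊆ 𝒰 m.unpair.1 ∧ F.Finite ∧ F.ncard = m.unpair.2 ∧
      V = ⋂₀ F}, ?_, ?_⟩
  · rintro m V ⟨F, hF, hFfin, -, rfl⟩
    exact hFfin.isOpen_sInter fun U hU => hopen _ _ (hF hU)
  · intro x y hxy
    obtain ⟨n, ⟨U, hU, hxor⟩, hfin⟩ := hsep x y hxy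
    set S : Set (Set X) := {V | V ∈ 𝒰 n ∧ x ∈ V ∧ y ∈ V} with hS
    have hSfin : S.Finite := by
      rcases hfin with hf | hf
      · exact hf.subset fun V hV => ⟨hV.1, hV.2.1⟩
      · exact hf.subset fun V hV => ⟨hV.1, hV.2.2⟩
    have hUS : U ∉ S := by
      rcases hxor with ⟨-, hy⟩ | ⟨-, hx⟩
      · exact fun hU' => hy hU'.2.2
      · exact fun hU' => hx hU'.2.1
    have hGfin : (insert U S).Finite := hSfin.insert U
    have hGcard : (insert U S).ncard = S.ncard + 1 :=
      Set.ncard_insert_of_notMem hUS hSfin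
    have hGsub : insert U S ⊆ 𝒰 n := by
      rintro V (rfl | hV)
      · exact hU
      · exact hV.1
    refine ⟨Nat.pair n (S.ncard + 1), ?_, ?_⟩
    · have hmem : ⋂₀ insert U S ∈ {V | ∃ F, F ⊆ 𝒰 (Nat.pair n (S.ncard + 1)).unpair.1 ∧
          F.Finite ∧ F.ncard = (Nat.pair n (S.ncard + 1)).unpair.2 ∧ V = ⋂₀ F} := by
        refine ⟨insert U S, ?_, hGfin, ?_, rfl⟩ <;> simp [Nat.unpair_pair, hGsub, hGcard]
      rcases hxor with ⟨hx, -⟩ | ⟨hy, -⟩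
      · refine Or.inl ⟨_, hmem, ?_⟩
        rintro V (rfl | hV)
        · exact hx
        · exact hV.2.1
      · refine Or.inr ⟨_, hmem, ?_⟩
        rintro V (rfl | hV)
        · exact hy
        · exact hV.2.2
    · rintro V ⟨F, hFsub, hFfin, hFcard, rfl⟩ ⟨hxV, hyV⟩
      rw [Nat.unpair_pair] at hFsub hFcard
      have hFS : F ⊆ S := fun W hW =>
        ⟨hFsub hW, hxV W hW, hyV W hW⟩
      have := Set.ncard_le_ncard hFS hSfin
      omega
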